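/- Let $(S_1,\dots,S_{n-1},P)$ be a commuting tuple of bounded operators on $\mathcal{H}$ such that there exist operators $A_1,\dots,A_{n-1}$ on $\mathcal{D}_P$ with $S_i - S_{n-i}^*P = D_P A_i D_P$ for each $i$, and let $B_1,\dots,B_{n-1}$ on $\mathcal{D}_{P^*}$ satisfy $S_i^* - S_{n-i}P^* = D_{P^*} B_i D_{P^*}$ for each $i$. Then for every $i = 1,\dots,n-1$: $B_i^* D_{P^*} P^* + P P^* B_{n-i} D_{P^*} = D_{P^*} S_i P^*$. -/

import Mathlib

open ContinuousLinearMap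

lemma selfadj_inj_on_closure_range {H : Type*} [NormedAddCommGroup H]
    [InnerProductSpace ℂ H] [CompleteSpace H]
    (T : H →L[ℂ] H) (hT : IsSelfAdjoint T) (u : H)
    (hu : u ∈ (LinearMap.range (T : H →ₗ[ℂ] H)).topologicalClosure) (h0 : T u = 0) : u = 0 := by
  have hadj : adjoint T = T := hT
  have hset : (↑(LinearMap.range (T : H →ₗ[ℂ] H)) : Set H) ⊆ {v | inner ℂ v u = (0 : ℂ)} := by
    rintro v ⟨a, rfl⟩
    show inner ℂ (T a) u = (0 : ℂ)
    rw [← hadj, adjoint_inner_left, h0, inner_zero_right]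
  have hclosed : IsClosed {v : H | inner ℂ v u = (0 : ℂ)} :=
    isClosed_eq (continuous_id.inner continuous_const) continuous_const
  have : u ∈ {v : H | inner ℂ v u = (0 : ℂ)} :=
    hclosed.closure_subset_iff.mpr hset hu
  exact inner_self_eq_zero.mp this

lemma ring_key {R : Type*} [Ring R] (d p q s t bi bn : R)
    (h1 : s - p * t = d * bi * d)
    (h2 : t - s * q = d * bn * d)
    (hc : d * (p * q) = (p * q) * d)
    (hsc : t * q = q * t)
    (hd : d * d = 1 - p * q) :
    d * (bi * d * q + p * q * bn * d) = d * (d * s * q) := by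
  calc d * (bi * d * q + p * q * bn * d)
      = (d * bi * d) * q + d * (p * q) * bn * d := by noncomm_ring
    _ = (s - p * t) * q + (p * q) * d * bn * d := by rw [← h1, hc]
    _ = (s - p * t) * q + (p * q) * (d * bn * d) := by noncomm_ring
    _ = (s - p * t) * q + (p * q) * (t - s * q) := by rw [← h2]
    _ = s * q - p * (t * q) + p * (q * t) - (p * q) * (s * q) := by noncomm_ring
    _ = s * q - p * (q * t) + p * (q * t) - (p * q) * (s * q) := by rw [hsc]
    _ = (1 - p * q) * (s * q) := by noncomm_ring
    _ = (d * d) * (s * q) := by rw [hd]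
    _ = d * (d * s * q) := by noncomm_ring


/-- Let `(S₁, …, S_{n-1}, P)` be a commuting tuple of bounded operators on a
Hilbert space `H`, `P` a contraction with defect operator `D_{P*}`, and let `Aᵢ`
(resp. `Bᵢ`), viewed as operators on `𝒟_P` (resp. `𝒟_{P*}`), satisfy the fundamental
equations `Sᵢ - S_{n-i}* P = D_P Aᵢ D_P` and `Sᵢ* - S_{n-i} P* = D_{P*} Bᵢ D_{P*}`.  Then for
each `1 ≤ i ≤ n-1`:  `Bᵢ* D_{P*} P* + P P* B_{n-i} D_{P*} = D_{P*} Sᵢ P*`. -/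
theorem stmt6 {H : Type*} [NormedAddCommGroup H] [InnerProductSpace ℂ H] [CompleteSpace H]
    (n : ℕ) (hn : 2 ≤ n)
    (S : ℕ → (H →L[ℂ] H)) (P : H →L[ℂ] H) (hP : ‖P‖ ≤ 1)
    (hcomm : ∀ i j, 1 ≤ i → i ≤ n - 1 → 1 ≤ j → j ≤ n - 1 → S i * S j = S j * S i)
    (hcommP : ∀ i, 1 ≤ i → i ≤ n - 1 → S i * P = P * S i)
    (DP : H →L[ℂ] H) (hDPpos : DP.IsPositive) (hDPsq : DP * DP = 1 - adjoint P * P)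
    (DPs : H →L[ℂ] H) (hDPspos : DPs.IsPositive) (hDPssq : DPs * DPs = 1 - P * adjoint P)
    (A : ℕ → (H →L[ℂ] H))
    (hA : ∀ i, 1 ≤ i → i ≤ n - 1 →
      S i - adjoint (S (n - i)) * P = DP * A i * DP)
    (B : ℕ → (H →L[ℂ] H))
    -- each `Bᵢ` is an operator on the defect space `𝒟_{P*}`:
    (hBrange : ∀ i, 1 ≤ i → i ≤ n - 1 → ∀ x : H,
      B i x ∈ (LinearMap.range (DPs : H →ₗ[ℂ] H)).topologicalClosure ∧
      adjoint (B i) x ∈ (LinearMap.range (DPs : H →ₗ[ℂ] H)).topologicalClosure)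
    (hB : ∀ i, 1 ≤ i → i ≤ n - 1 →
      adjoint (S i) - S (n - i) * adjoint P = DPs * B i * DPs) :
    ∀ i, 1 ≤ i → i ≤ n - 1 →
      adjoint (B i) * DPs * adjoint P + P * adjoint P * B (n - i) * DPs =
        DPs * S i * adjoint P := by

  intro i h1 hi
  have hni1 : 1 ≤ n - i := by omega
  have hni2 : n - i ≤ n - 1 := by omega
  have hnni : n - (n - i) = i := by omega
  have hDPsa : adjoint DPs = DPs := hDPspos.isSelfAdjoint
  have hBi := hB i h1 hi
  have hBni := hB (n - i) hni1 hni2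
  rw [hnni] at hBni
  -- adjoint of hBi
  have hDPss : star DPs = DPs := hDPsa
  have hBi' : S i - P * adjoint (S (n - i)) = DPs * adjoint (B i) * DPs := by
    have h := congrArg (fun T : H →L[ℂ] H => adjoint T) hBi
    simp only [← star_eq_adjoint, star_sub, star_mul, star_star, hDPss] at h
    simpa [← star_eq_adjoint, mul_assoc] using h
  -- commutation of DPs with P P*
  have hPPs : P * adjoint P = 1 - DPs * DPs := by rw [hDPssq, sub_sub_cancel]
  have hcommDPs : DPs * (P * adjoint P) = (P * adjoint P) * DPs := by
    rw [hPPs]; noncomm_ring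
  -- adjoint of hcommP
  have hScomm : adjoint (S (n - i)) * adjoint P = adjoint P * adjoint (S (n - i)) := by
    have h := congrArg (fun T : H →L[ℂ] H => adjoint T) (hcommP (n - i) hni1 hni2)
    simp only [← star_eq_adjoint, star_mul] at h
    exact h.symm
  have key : DPs * (adjoint (B i) * DPs * adjoint P + P * adjoint P * B (n - i) * DPs) =
      DPs * (DPs * S i * adjoint P) :=
    ring_key DPs P (adjoint P) (S i) (adjoint (S (n - i))) (adjoint (B i)) (B (n - i))
      hBi' hBni hcommDPs hScomm hDPssq
  -- now conclude pointwise
  set M := (LinearMap.range (DPs : H →ₗ[ℂ] H)).topologicalClosure with hM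
  have hrange : ∀ y : H, DPs y ∈ M := fun y =>
    Submodule.le_topologicalClosure _ ⟨y, rfl⟩
  ext x
  set L := adjoint (B i) * DPs * adjoint P + P * adjoint P * B (n - i) * DPs with hL
  set R := DPs * S i * adjoint P with hR
  have hmemL : L x ∈ M := by
    have h1' : (adjoint (B i) * DPs * adjoint P) x
        = adjoint (B i) (DPs (adjoint P x)) := rfl
    have h2' : (P * adjoint P * B (n - i) * DPs) x
        = (P * adjoint P) (B (n - i) (DPs x)) := rfl
    have hz : B (n - i) (DPs x) ∈ M := (hBrange (n - i) hni1 hni2 _).1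
    have h2m : (P * adjoint P) (B (n - i) (DPs x)) ∈ M := by
      have : (P * adjoint P) (B (n - i) (DPs x))
          = B (n - i) (DPs x) - DPs (DPs (B (n - i) (DPs x))) := by
        rw [hPPs]
        simp [ContinuousLinearMap.sub_apply, ContinuousLinearMap.mul_apply]
      rw [this]
      exact M.sub_mem hz (hrange _)
    have h1m : adjoint (B i) (DPs (adjoint P x)) ∈ M := (hBrange i h1 hi _).2
    show (adjoint (B i) * DPs * adjoint P) x + (P * adjoint P * B (n - i) * DPs) x ∈ M
    rw [h1', h2']
    exact M.add_mem h1m h2m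
  have hmemR : R x ∈ M := hrange _
  have hu : L x - R x ∈ M := M.sub_mem hmemL hmemR
  have h0 : DPs (L x - R x) = 0 := by
    have := congrArg (fun T : H →L[ℂ] H => T x) key
    simp only [ContinuousLinearMap.mul_apply] at this
    rw [map_sub]
    rw [show DPs (L x) = DPs (R x) from this]
    simp
  have := selfadj_inj_on_closure_range DPs hDPspos.isSelfAdjoint _ hu h0
  exact sub_eq_zero.mp this
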